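/- A finite word w is rich if and only if every non-empty prefix of w has a unioccurrent palindromic suffix. -/
import Mathlib

/-- The finset of (distinct) palindromic factors of a finite word `w`,
including the empty word. -/
def palFactors {A : Type*} [DecidableEq A] (w : List A) : Finset (List A) :=
  ((w.inits.flatMap List.tails).filter (fun u => u.reverse = u)).toFinset

/-- A finite word `w` is rich if it has exactly `|w| + 1` distinct palindromic factors. -/
def Rich {A : Type*} [DecidableEq A] (w : List A) : Prop :=
  (palFactors w).card = w.length + 1

/-- A non-empty word `u` is unioccurrent in `v` if there is exactly one pair of
words `(s, t)` with `v = s ++ u ++ t`. -/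
def Unioccurrent {A : Type*} (u v : List A) : Prop :=
  u ≠ [] ∧ ∃! st : List A × List A, v = st.1 ++ u ++ st.2

section Aux

set_option linter.unusedSectionVars false
variable {A : Type*} [DecidableEq A]

lemma mem_palFactors {u w : List A} :
    u ∈ palFactors w ↔ u <:+: w ∧ u.reverse = u := by
  simp only [palFactors, List.mem_toFinset, List.mem_filter, List.mem_flatMap,
    List.mem_inits, List.mem_tails, decide_eq_true_eq]
  constructor
  · rintro ⟨⟨p, hp, hu⟩, hr⟩
    exact ⟨hu.isInfix.trans hp.isInfix, hr⟩
  · rintro ⟨⟨s, t, rfl⟩, hr⟩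
    exact ⟨⟨s ++ u, ⟨t, rfl⟩, ⟨s, rfl⟩⟩, hr⟩

lemma nil_mem_palFactors (w : List A) : [] ∈ palFactors w :=
  mem_palFactors.mpr ⟨List.nil_infix, rfl⟩

lemma palFactors_mono {q p : List A} (h : q <:+: p) : palFactors q ⊆ palFactors p := by
  intro u hu
  rw [mem_palFactors] at *
  exact ⟨hu.1.trans h, hu.2⟩

lemma palFactors_nil : palFactors ([] : List A) = {[]} := by
  ext u
  simp [mem_palFactors, List.infix_nil]
  rintro rfl; rfl

/-- A suffix of a palindrome which is itself a palindrome is also a prefix. -/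
lemma pal_suffix_prefix {u v : List A} (h : u <:+ v) (hv : v.reverse = v)
    (hu : u.reverse = u) : u <+: v := by
  have := List.reverse_prefix.mpr h
  rwa [hu, hv] at this

/-- A nonempty suffix of `q ++ [a]` has the form `v' ++ [a]` with `v' <:+ q`. -/
lemma suffix_concat_struct {v q : List A} {a : A} (h : v <:+ q ++ [a]) (hv : v ≠ []) :
    ∃ v', v = v' ++ [a] ∧ v' <:+ q := by
  obtain ⟨s, hs⟩ := h
  obtain ⟨v', b, rfl⟩ := (v.eq_nil_or_concat).resolve_left hv
  rw [List.concat_eq_append, ← List.append_assoc] at hs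
  obtain ⟨h3, h4⟩ := List.append_inj' hs rfl
  simp only [List.cons.injEq, and_true] at h4
  subst h4
  exact ⟨v', by simp, ⟨s, h3⟩⟩

/-- A palindromic factor of `q ++ [a]` which is not a factor of `q` is a suffix. -/
lemma new_is_suffix {u q : List A} {a : A} (h : u <:+: q ++ [a]) (hq : ¬ u <:+: q) :
    u <:+ q ++ [a] := by
  obtain ⟨s, t, ht⟩ := h
  rcases t.eq_nil_or_concat with rfl | ⟨t', b, rfl⟩
  · exact ⟨s, by simpa using ht⟩
  · exfalso
    apply hq
    rw [List.concat_eq_append, ← List.append_assoc] at ht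
    have h2 := List.append_inj' ht rfl
    exact ⟨s, t', h2.1⟩

lemma new_ne_nil {u q : List A} (hq : u ∉ palFactors q) : u ≠ [] := by
  rintro rfl; exact hq (nil_mem_palFactors q)

/-- Any palindromic factor of `q ++ [a]` not occurring in `q` equals any other:
there is at most one new palindromic factor. -/
lemma new_unique {q : List A} {a : A} {u v : List A}
    (hu : u ∈ palFactors (q ++ [a])) (hu' : u ∉ palFactors q)
    (hv : v ∈ palFactors (q ++ [a])) (hv' : v ∉ palFactors q) : u = v := by
  -- wlog via an auxiliary claim
  have key : ∀ x y : List A, x ∈ palFactors (q ++ [a]) → x ∉ palFactors q →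
      y ∈ palFactors (q ++ [a]) → y ∉ palFactors q → x.length ≤ y.length → x = y := by
    intro x y hx hx' hy hy' hlen
    rw [mem_palFactors] at hx hy
    have hxs : x <:+ q ++ [a] := new_is_suffix hx.1 (fun h => hx' (mem_palFactors.mpr ⟨h, hx.2⟩))
    have hys : y <:+ q ++ [a] := new_is_suffix hy.1 (fun h => hy' (mem_palFactors.mpr ⟨h, hy.2⟩))
    have hxy : x <:+ y := List.suffix_of_suffix_length_le hxs hys hlen
    rcases eq_or_lt_of_le hlen with heq | hlt
    · exact List.IsSuffix.eq_of_length hxy heq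
    · exfalso
      -- x is a proper prefix of y, y = y' ++ [a] with y' <:+ q, so x <:+: q
      have hxp : x <+: y := pal_suffix_prefix hxy hy.2 hx.2
      obtain ⟨y', rfl, hy'q⟩ := suffix_concat_struct hys (new_ne_nil hy')
      have hxy' : x <+: y' := by
        apply List.prefix_of_prefix_length_le hxp (List.prefix_append y' [a])
        simp at hlt ⊢; omega
      exact hx' (mem_palFactors.mpr ⟨hxy'.isInfix.trans hy'q.isInfix, hx.2⟩)
  rcases le_total u.length v.length with h | h
  · exact key u v hu hu' hv hv' h
  · exact (key v u hv hv' hu hu' h).symm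

/-- The card of `palFactors` increases by at most 1 when appending a letter. -/
lemma card_step_le (q : List A) (a : A) :
    (palFactors (q ++ [a])).card ≤ (palFactors q).card + 1 := by
  have hsub : palFactors (q ++ [a]) ⊆ palFactors q ∪ (palFactors (q ++ [a]) \ palFactors q) := by
    intro u hu
    by_cases h : u ∈ palFactors q
    · exact Finset.mem_union_left _ h
    · exact Finset.mem_union_right _ (Finset.mem_sdiff.mpr ⟨hu, h⟩)
  calc (palFactors (q ++ [a])).card
      ≤ (palFactors q ∪ (palFactors (q ++ [a]) \ palFactors q)).card :=
        Finset.card_le_card hsub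
    _ ≤ (palFactors q).card + (palFactors (q ++ [a]) \ palFactors q).card :=
        Finset.card_union_le _ _
    _ ≤ (palFactors q).card + 1 := by
        gcongr
        rw [Finset.card_le_one]
        intro x hx y hy
        rw [Finset.mem_sdiff] at hx hy
        exact new_unique hx.1 hx.2 hy.1 hy.2

lemma card_le (w : List A) : (palFactors w).card ≤ w.length + 1 := by
  induction w using List.reverseRecOn with
  | nil => simp [palFactors_nil]
  | append_singleton q a ih =>
      have := card_step_le q a
      simp only [List.length_append, List.length_singleton]
      omega

/-- The key step equivalence. -/
lemma step_iff (q : List A) (a : A) :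
    (palFactors (q ++ [a])).card = (palFactors q).card + 1 ↔
      ∃ s : List A, s <:+ q ++ [a] ∧ s.reverse = s ∧ Unioccurrent s (q ++ [a]) := by
  have hmono : palFactors q ⊆ palFactors (q ++ [a]) :=
    palFactors_mono ((List.prefix_append q [a]).isInfix)
  constructor
  · intro hcard
    -- there is a new element
    have : ∃ u, u ∈ palFactors (q ++ [a]) ∧ u ∉ palFactors q := by
      by_contra h
      push_neg at h
      have : palFactors (q ++ [a]) ⊆ palFactors q := fun u hu => h u hu
      have := Finset.card_le_card this
      omega
    obtain ⟨u, hu, hu'⟩ := this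
    rw [mem_palFactors] at hu
    have hune : u ≠ [] := new_ne_nil hu'
    have hinf : ¬ u <:+: q := fun h => hu' (mem_palFactors.mpr ⟨h, hu.2⟩)
    have hus : u <:+ q ++ [a] := new_is_suffix hu.1 hinf
    obtain ⟨s0, hs0⟩ := hus
    refine ⟨u, ⟨s0, hs0⟩, hu.2, hune, (s0, []), by simp [hs0], ?_⟩
    rintro ⟨s', t'⟩ heq
    simp only at heq
    rcases t'.eq_nil_or_concat with rfl | ⟨t'', b, rfl⟩
    · simp only [List.append_nil] at heq
      have : s' = s0 := List.append_cancel_right (heq.symm.trans hs0.symm)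
      simp [this]
    · exfalso
      apply hinf
      rw [List.concat_eq_append, ← List.append_assoc] at heq
      have h2 := List.append_inj' heq rfl
      exact ⟨s', t'', h2.1.symm⟩
  · rintro ⟨s, hss, hsp, hsne, ⟨⟨s1, t1⟩, hocc, huniq⟩⟩
    -- s is not a factor of q
    have hnotq : s ∉ palFactors q := by
      intro hmem
      obtain ⟨x, y, hxy⟩ := (mem_palFactors.mp hmem).1
      obtain ⟨r, hr⟩ := hss
      have h1 : (x, y ++ [a]) = (s1, t1) := huniq (x, y ++ [a]) (by rw [← hxy]; simp [List.append_assoc])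
      have h2 : (r, ([] : List A)) = (s1, t1) := huniq (r, []) (by simp [hr.symm])
      have : y ++ [a] = ([] : List A) := by
        rw [Prod.ext_iff] at h1 h2
        simp only at h1 h2
        rw [h1.2, ← h2.2]
      simp at this
    have hmem : s ∈ palFactors (q ++ [a]) := mem_palFactors.mpr ⟨hss.isInfix, hsp⟩
    have hlt : (palFactors q).card < (palFactors (q ++ [a])).card :=
      Finset.card_lt_card (Finset.ssubset_iff_of_subset hmono |>.mpr ⟨s, hmem, hnotq⟩)
    have := card_step_le q a
    omega

end Aux

/-- A finite word `w` is rich if and only if every non-empty prefix of `w` has a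
unioccurrent palindromic suffix. -/
theorem rich_iff_prefixes_have_unioccurrent_pal_suffix {A : Type*} [DecidableEq A]
    (w : List A) :
    Rich w ↔ ∀ p : List A, p <+: w → p ≠ [] →
      ∃ s : List A, s <:+ p ∧ s.reverse = s ∧ Unioccurrent s p := by
  induction w using List.reverseRecOn with
  | nil =>
      exact iff_of_true (by simp [Rich, palFactors_nil])
        (fun p hp hne => absurd (List.prefix_nil.mp hp) hne)
  | append_singleton q a ih =>
      have key : Rich (q ++ [a]) ↔
          Rich q ∧ (palFactors (q ++ [a])).card = (palFactors q).card + 1 := by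
        unfold Rich
        have h1 := card_step_le q a
        have h2 := card_le q
        have h3 := card_le (q ++ [a])
        have hmono : palFactors q ⊆ palFactors (q ++ [a]) :=
          palFactors_mono ((List.prefix_append q [a]).isInfix)
        have h4 := Finset.card_le_card hmono
        simp only [List.length_append, List.length_singleton] at *
        omega
      rw [key, ih, step_iff]
      constructor
      · rintro ⟨hq, hstep⟩ p hp hne
        rcases List.prefix_concat_iff.mp hp with rfl | hp'
        · exact hstep
        · exact hq p hp' hne
      · intro h
        refine ⟨fun p hp hne => h p (hp.trans (List.prefix_append q [a])) hne, ?_⟩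
        exact h (q ++ [a]) List.prefix_rfl (by simp)
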